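/- Let D1, D2, D3 be the three line segments in ℝ⁴: D1 from e1+e2 to e3+e4, D2 from e1+e3 to e2+e4, D3 from e1+e4 to e2+e3. Then the vector of mixed areas of projections (A∧B)_{ij} := MV(π_{ij}(A), π_{ij}(B)) satisfies: D1∧D2 = (2,2,0,0,2,2), D1∧D3 = (2,0,2,2,0,2), D2∧D3 = (0,2,2,2,2,0), and D_k∧D_k = (0,0,0,0,0,0) for each k. -/

import Mathlib

open MeasureTheory Pointwise

/-- Normalized mixed area of two planar convex bodies:
`MV(K,L) = vol(K+L) − vol(K) − vol(L)`, so that `MV(K,K)` is the normalized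
area of `K` (the unit square having area 2). -/
noncomputable def mixedArea (K L : Set (Fin 2 → ℝ)) : ℝ :=
  (volume (K + L)).toReal - (volume K).toReal - (volume L).toReal

/-- The coordinate projection of `ℝ⁴` keeping coordinates `a` and `b`. -/
def coordProj (a b : Fin 4) (x : Fin 4 → ℝ) : Fin 2 → ℝ := ![x a, x b]

/-- `p_{ij}(A,B)` where `a b` are the two retained coordinates (those other
than `i` and `j`). -/
noncomputable def projMV (a b : Fin 4) (A B : Set (Fin 4 → ℝ)) : ℝ :=
  mixedArea (coordProj a b '' A) (coordProj a b '' B)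

/-- The vector `A ∧ B = (p12, p13, p14, p23, p24, p34)` of mixed areas of the
six coordinate projections. -/
noncomputable def wedgeVec (A B : Set (Fin 4 → ℝ)) : Fin 6 → ℝ :=
  ![projMV 2 3 A B, projMV 1 3 A B, projMV 1 2 A B,
    projMV 0 3 A B, projMV 0 2 A B, projMV 0 1 A B]

/-- The segment `D_{12|34}` from `e₁+e₂` to `e₃+e₄`. -/
def D1 : Set (Fin 4 → ℝ) := segment ℝ ![1,1,0,0] ![0,0,1,1]

/-- The segment `D_{13|24}` from `e₁+e₃` to `e₂+e₄`. -/
def D2 : Set (Fin 4 → ℝ) := segment ℝ ![1,0,1,0] ![0,1,0,1]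

/-- The segment `D_{14|23}` from `e₁+e₄` to `e₂+e₃`. -/
def D3 : Set (Fin 4 → ℝ) := segment ℝ ![1,0,0,1] ![0,1,1,0]

/-! ### Auxiliary lemmas -/

/-- The linear map `ℝ² → ℝ²` sending `(t, s)` to `t • u + s • v`. -/
noncomputable def segLin (u v : Fin 2 → ℝ) : (Fin 2 → ℝ) →ₗ[ℝ] (Fin 2 → ℝ) :=
  Matrix.toLin' (Matrix.of ![![u 0, v 0], ![u 1, v 1]])

lemma segLin_apply (u v x : Fin 2 → ℝ) : segLin u v x = x 0 • u + x 1 • v := by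
  funext i
  fin_cases i <;>
    simp [segLin, Matrix.toLin'_apply, Matrix.mulVec, dotProduct, Fin.sum_univ_two] <;>
    ring

lemma segLin_det (u v : Fin 2 → ℝ) :
    LinearMap.det (segLin u v) = u 0 * v 1 - v 0 * u 1 := by
  simp [segLin, LinearMap.det_toLin', Matrix.det_fin_two]

lemma span_singleton_ne_top (v : Fin 2 → ℝ) : Submodule.span ℝ {v} ≠ ⊤ := by
  have : Submodule.span ℝ ({v} : Set (Fin 2 → ℝ)) < ⊤ := by
    apply span_lt_top_of_card_lt_finrank
    simp [Module.finrank_fintype_fun_eq_card]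
  exact this.ne

lemma volume_segment (a b : Fin 2 → ℝ) : volume (segment ℝ a b) = 0 := by
  have hsub : segment ℝ a b ⊆ a +ᵥ (Submodule.span ℝ {b - a} : Set (Fin 2 → ℝ)) := by
    rw [segment_eq_image']
    rintro z ⟨θ, -, rfl⟩
    exact ⟨θ • (b - a), Submodule.smul_mem _ θ (Submodule.mem_span_singleton_self _), rfl⟩
  refine measure_mono_null hsub ?_
  rw [measure_vadd]
  exact Measure.addHaar_submodule volume _ (span_singleton_ne_top _)

lemma seg_add_seg (a b c d : Fin 2 → ℝ) :
    segment ℝ a b + segment ℝ c d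
      = (a + c) +ᵥ (segLin (b - a) (d - c) '' Set.Icc 0 1) := by
  ext z
  constructor
  · rintro ⟨x, hx, y, hy, rfl⟩
    rw [segment_eq_image'] at hx hy
    obtain ⟨t, ht, rfl⟩ := hx
    obtain ⟨s, hs, rfl⟩ := hy
    refine ⟨segLin (b - a) (d - c) ![t, s], ⟨![t, s], ?_, rfl⟩, ?_⟩
    · constructor <;> intro i <;> fin_cases i <;>
        simp [ht.1, ht.2, hs.1, hs.2]
    · rw [segLin_apply]
      simp only [Matrix.cons_val_zero, Matrix.cons_val_one, Matrix.head_cons, vadd_eq_add]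
      abel
  · rintro ⟨_, ⟨w, hw, rfl⟩, rfl⟩
    rw [segLin_apply]
    refine ⟨a + w 0 • (b - a), ?_, c + w 1 • (d - c), ?_, ?_⟩
    · rw [segment_eq_image']
      exact ⟨w 0, ⟨hw.1 0, hw.2 0⟩, rfl⟩
    · rw [segment_eq_image']
      exact ⟨w 1, ⟨hw.1 1, hw.2 1⟩, rfl⟩
    · simp only [vadd_eq_add]
      abel

lemma mixedArea_segment (a b c d : Fin 2 → ℝ) :
    mixedArea (segment ℝ a b) (segment ℝ c d)
      = |(b 0 - a 0) * (d 1 - c 1) - (d 0 - c 0) * (b 1 - a 1)| := by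
  have h1 : volume (segment ℝ a b + segment ℝ c d)
      = ENNReal.ofReal |(b 0 - a 0) * (d 1 - c 1) - (d 0 - c 0) * (b 1 - a 1)| := by
    rw [seg_add_seg, measure_vadd, Measure.addHaar_image_linearMap, segLin_det]
    have : volume (Set.Icc (0 : Fin 2 → ℝ) 1) = 1 := by
      rw [Real.volume_Icc_pi]
      simp
    rw [this, mul_one]
    simp [Pi.sub_apply]
  rw [mixedArea, h1, volume_segment, volume_segment]
  simp [ENNReal.toReal_ofReal (abs_nonneg _)]

/-- `coordProj a b` as a linear map. -/
def coordProjL (a b : Fin 4) : (Fin 4 → ℝ) →ₗ[ℝ] (Fin 2 → ℝ) where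
  toFun := coordProj a b
  map_add' x y := by funext i; fin_cases i <;> simp [coordProj]
  map_smul' c x := by funext i; fin_cases i <;> simp [coordProj]

lemma image_coordProj_segment (a b : Fin 4) (p q : Fin 4 → ℝ) :
    coordProj a b '' segment ℝ p q
      = segment ℝ (coordProj a b p) (coordProj a b q) :=
  image_segment ℝ (coordProjL a b).toAffineMap p q

lemma projMV_seg (a b : Fin 4) (p q r s : Fin 4 → ℝ) :
    projMV a b (segment ℝ p q) (segment ℝ r s)
      = |(q a - p a) * (s b - r b) - (s a - r a) * (q b - p b)| := by
  rw [projMV, image_coordProj_segment, image_coordProj_segment, mixedArea_segment]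
  simp [coordProj]

theorem wedge_of_segments :
    wedgeVec D1 D2 = ![2,2,0,0,2,2] ∧
    wedgeVec D1 D3 = ![2,0,2,2,0,2] ∧
    wedgeVec D2 D3 = ![0,2,2,2,2,0] ∧
    wedgeVec D1 D1 = ![0,0,0,0,0,0] ∧
    wedgeVec D2 D2 = ![0,0,0,0,0,0] ∧
    wedgeVec D3 D3 = ![0,0,0,0,0,0] := by
  refine ⟨?_, ?_, ?_, ?_, ?_, ?_⟩ <;>
  · funext i
    fin_cases i <;>
      norm_num [wedgeVec, D1, D2, D3, projMV_seg, Matrix.cons_val_two, Matrix.cons_val_three]
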